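/- arXiv:1902.08250 — 2 statements merged into one kernel-verified Lean document; each statement's English description precedes it below -/
import Mathlib

section
/- For every real number z and every real θ, the series ∑_{m=-∞}^{∞} i^m J_m(z) e^{i m θ} converges to e^{i z cos θ} (the Jacobi–Anger expansion). -/
open Real Complex

/-- Bessel function of the first kind of integer order, defined via the
integral representation `J_m(z) = (i^{-m}/(2π)) ∫_{-π}^{π} e^{i z cos θ} cos(m θ) dθ`. -/
noncomputable def besselJ (m : ℤ) (z : ℝ) : ℂ :=
  (Complex.I ^ (-m) / (2 * π)) *
    ∫ θ in (-π : ℝ)..π, Complex.exp (Complex.I * z * Real.cos θ) * (Real.cos (m * θ) : ℂ)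

open MeasureTheory intervalIntegral

noncomputable section JA
instance fact_two_pi_pos : Fact ((0:ℝ) < 2 * π) := ⟨Real.two_pi_pos⟩
def JAg (z : ℝ) : ℝ → ℂ := fun x => Complex.exp (Complex.I * z * Real.cos x)
def JAg1 (z : ℝ) : ℝ → ℂ := fun x => -(Complex.I * z * Real.sin x) * JAg z x
def JAg2 (z : ℝ) : ℝ → ℂ :=
  fun x => -(Complex.I * z) * ((Real.cos x : ℂ) * JAg z x + (Real.sin x : ℂ) * JAg1 z x)
lemma JAg_cont (z : ℝ) : Continuous (JAg z) := by unfold JAg; fun_prop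
lemma JAg1_cont (z : ℝ) : Continuous (JAg1 z) := by unfold JAg1 JAg; fun_prop
lemma JAg2_cont (z : ℝ) : Continuous (JAg2 z) := by unfold JAg2 JAg1 JAg; fun_prop

lemma JAg_deriv (z : ℝ) (x : ℝ) : HasDerivAt (JAg z) (JAg1 z x) x := by
  have h0 : HasDerivAt (fun x : ℝ => (Real.cos x : ℂ)) (-(Real.sin x) : ℝ) x :=
    (Real.hasDerivAt_cos x).ofReal_comp
  have h1 : HasDerivAt (fun x : ℝ => Complex.I * z * (Real.cos x : ℂ))
      (Complex.I * z * (-(Real.sin x) : ℝ)) x := h0.const_mul _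
  have := h1.cexp
  convert this using 1
  · rfl
  unfold JAg1 JAg
  push_cast
  ring


lemma JAg1_deriv (z : ℝ) (x : ℝ) : HasDerivAt (JAg1 z) (JAg2 z x) x := by
  have h0 : HasDerivAt (fun x : ℝ => (Real.sin x : ℂ)) ((Real.cos x : ℝ) : ℂ) x :=
    (Real.hasDerivAt_sin x).ofReal_comp
  have h1 : HasDerivAt (fun x : ℝ => -(Complex.I * z * (Real.sin x : ℂ)))
      (-(Complex.I * z * (Real.cos x : ℂ))) x := by
    exact ((h0.const_mul (Complex.I * z)).neg)
  have := h1.mul (JAg_deriv z x)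
  convert this using 1
  · rfl
  · rfl
  unfold JAg2 JAg1
  ring


lemma hab : (-π : ℝ) < π := by linarith [Real.pi_pos]

lemma ibp1 (z : ℝ) {n : ℤ} (hn : n ≠ 0) :
    fourierCoeffOn hab (JAg z) n = 1 / (Complex.I * n) * fourierCoeffOn hab (JAg1 z) n := by
  have h := fourierCoeffOn_of_hasDerivAt hab hn
    (fun x _ => JAg_deriv z x) ((JAg1_cont z).intervalIntegrable _ _)
  rw [h]
  have hval : JAg z π - JAg z (-π) = 0 := by simp [JAg, Real.cos_neg]
  rw [hval, mul_zero, zero_sub]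
  have hπ : (π : ℂ) ≠ 0 := Complex.ofReal_ne_zero.mpr Real.pi_ne_zero
  have hnc : (n : ℂ) ≠ 0 := Int.cast_ne_zero.mpr hn
  have : ((π : ℂ) - (-π : ℝ)) = 2 * π := by push_cast; ring
  rw [this]
  field_simp

lemma ibp2 (z : ℝ) {n : ℤ} (hn : n ≠ 0) :
    fourierCoeffOn hab (JAg1 z) n = 1 / (Complex.I * n) * fourierCoeffOn hab (JAg2 z) n := by
  have h := fourierCoeffOn_of_hasDerivAt hab hn
    (fun x _ => JAg1_deriv z x) ((JAg2_cont z).intervalIntegrable _ _)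
  rw [h]
  have hval : JAg1 z π - JAg1 z (-π) = 0 := by simp [JAg1, Real.sin_pi]
  rw [hval, mul_zero, zero_sub]
  have hπ : (π : ℂ) ≠ 0 := Complex.ofReal_ne_zero.mpr Real.pi_ne_zero
  have hnc : (n : ℂ) ≠ 0 := Int.cast_ne_zero.mpr hn
  have : ((π : ℂ) - (-π : ℝ)) = 2 * π := by push_cast; ring
  rw [this]
  field_simp

lemma coeff2_bound (z : ℝ) (n : ℤ) :
    ‖fourierCoeffOn hab (JAg2 z) n‖ ≤ |z| * (1 + |z|) := by
  have h2π : (0:ℝ) < 2 * π := Real.two_pi_pos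
  have hg : ∀ x : ℝ, ‖JAg z x‖ = 1 := by
    intro x
    simp only [JAg]
    rw [Complex.norm_exp]
    have : (Complex.I * z * Real.cos x).re = 0 := by simp
    rw [this, Real.exp_zero]
  have hg1 : ∀ x : ℝ, ‖JAg1 z x‖ ≤ |z| := by
    intro x
    simp only [JAg1]
    rw [norm_mul, hg, mul_one, norm_neg, norm_mul, norm_mul]
    simp only [Complex.norm_I, one_mul, Complex.norm_real, Real.norm_eq_abs]
    have := mul_le_mul_of_nonneg_left (Real.abs_sin_le_one x) (abs_nonneg z)
    simpa using this
  have hg2 : ∀ x : ℝ, ‖JAg2 z x‖ ≤ |z| * (1 + |z|) := by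
    intro x
    simp only [JAg2]
    rw [norm_mul, norm_neg, norm_mul]
    simp only [Complex.norm_I, one_mul, Complex.norm_real, Real.norm_eq_abs]
    apply mul_le_mul_of_nonneg_left _ (abs_nonneg z)
    refine le_trans (norm_add_le _ _) ?_
    have h1 : ‖(Real.cos x : ℂ) * JAg z x‖ ≤ 1 := by
      rw [norm_mul, hg, mul_one, Complex.norm_real, Real.norm_eq_abs]
      exact Real.abs_cos_le_one x
    have h2 : ‖(Real.sin x : ℂ) * JAg1 z x‖ ≤ |z| := by
      rw [norm_mul]
      have hs : ‖(Real.sin x : ℂ)‖ ≤ 1 := by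
        rw [Complex.norm_real, Real.norm_eq_abs]; exact Real.abs_sin_le_one x
      calc ‖(Real.sin x : ℂ)‖ * ‖JAg1 z x‖ ≤ 1 * |z| :=
            mul_le_mul hs (hg1 x) (norm_nonneg _) zero_le_one
        _ = |z| := one_mul _
    exact add_le_add h1 h2
  rw [fourierCoeffOn_eq_integral, norm_smul]
  have hb : ∀ x ∈ Set.uIoc (-π) π,
      ‖fourier (-n) (x : AddCircle (π - -π)) • JAg2 z x‖ ≤ |z| * (1 + |z|) := by
    intro x _
    rw [norm_smul]
    have hf : ‖fourier (-n) (x : AddCircle (π - -π))‖ = 1 := by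
      rw [fourier_apply, Circle.norm_coe]
    rw [hf, one_mul]
    exact hg2 x
  have hint := intervalIntegral.norm_integral_le_of_norm_le_const hb
  have hπab : |π - -π| = 2 * π := by rw [abs_of_pos (by linarith [Real.pi_pos])]; ring
  rw [hπab] at hint
  have h1 : ‖(1 / (π - -π) : ℝ)‖ = 1 / (2*π) := by
    have hx : π - -π = 2*π := by ring
    rw [hx, Real.norm_eq_abs, abs_of_pos (by positivity)]
  rw [h1]
  have := mul_le_mul_of_nonneg_left hint (le_of_lt (by positivity : (0:ℝ) < 1/(2*π)))
  refine le_trans this (le_of_eq ?_)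
  field_simp


lemma JAg_periodic (z : ℝ) : Function.Periodic (JAg z) (2 * π) := by
  intro x; simp [JAg, Real.cos_add_two_pi]

/-- the function on the circle -/
def JAF (z : ℝ) : C(AddCircle (2 * π), ℂ) :=
  ⟨(JAg_periodic z).lift, continuous_coinduced_dom.mpr (JAg_cont z)⟩

lemma JAF_coe (z : ℝ) (x : ℝ) : JAF z (x : AddCircle (2 * π)) = JAg z x := rfl

lemma fourierCoeff_JAF (z : ℝ) (n : ℤ) :
    fourierCoeff (JAF z : AddCircle (2*π) → ℂ) n = fourierCoeffOn hab (JAg z) n := by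
  rw [fourierCoeff_eq_intervalIntegral _ n (-π), fourierCoeffOn_eq_integral]
  have hb : -π + 2*π = π := by ring
  rw [hb]
  have hsc : (1 / (2*π) : ℝ) = (1 / (π - -π) : ℝ) := by norm_num; ring
  rw [hsc]
  congr 1
  apply intervalIntegral.integral_congr
  intro x _
  simp only [JAF_coe, fourier_coe_apply]
  norm_num
  left
  congr 1
  rw [show ((π:ℂ) + π) = 2 * π by ring]

/-- odd part integrates to zero -/
lemma odd_int_zero (z : ℝ) (n : ℤ) :
    ∫ x in (-π:ℝ)..π, JAg z x * (Real.sin (n * x) : ℂ) = 0 := by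
  have hcont : Continuous fun x : ℝ => JAg z x * (Real.sin (n * x) : ℂ) := by
    unfold JAg; fun_prop
  have h1 : ∫ x in (-π:ℝ)..(0:ℝ), JAg z x * (Real.sin (n * x) : ℂ)
      = - ∫ x in (0:ℝ)..π, JAg z x * (Real.sin (n * x) : ℂ) := by
    have := intervalIntegral.integral_comp_neg (a := (0:ℝ)) (b := π)
      (fun x => JAg z x * (Real.sin (n * x) : ℂ))
    rw [neg_zero] at this
    rw [← this, ← intervalIntegral.integral_neg]
    apply intervalIntegral.integral_congr
    intro x _
    simp [JAg, Real.cos_neg, mul_neg, Real.sin_neg]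
  rw [← intervalIntegral.integral_add_adjacent_intervals
      (hcont.intervalIntegrable _ _) (hcont.intervalIntegrable _ _) (a := -π) (b := 0) (c := π),
    h1, neg_add_cancel]

lemma fourierCoeff_eq_besselJ (z : ℝ) (n : ℤ) :
    fourierCoeff (JAF z : AddCircle (2*π) → ℂ) n = Complex.I ^ n * besselJ n z := by
  rw [fourierCoeff_eq_intervalIntegral _ n (-π)]
  have hb : -π + 2*π = π := by ring
  rw [hb]
  have hcc : Continuous fun x : ℝ => JAg z x * (Real.cos (n * x) : ℂ) := by
    unfold JAg; fun_prop
  have hcs : Continuous fun x : ℝ => Complex.I * (JAg z x * (Real.sin (n * x) : ℂ)) := by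
    unfold JAg; fun_prop
  have step1 : (∫ x in (-π:ℝ)..π, fourier (-n) (x : AddCircle (2*π)) • JAF z x)
      = ∫ x in (-π:ℝ)..π, (JAg z x * (Real.cos (n * x) : ℂ)
          - Complex.I * (JAg z x * (Real.sin (n * x) : ℂ))) := by
    apply intervalIntegral.integral_congr
    intro x _
    simp only [JAF_coe, fourier_coe_apply, smul_eq_mul]
    have harg : 2 * (π:ℂ) * Complex.I * ((-n : ℤ) : ℂ) * (x:ℝ) / ((2 * π : ℝ):ℂ)
        = ((-(n * x) : ℝ) : ℂ) * Complex.I := by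
      have hπ : (π:ℂ) ≠ 0 := Complex.ofReal_ne_zero.mpr Real.pi_ne_zero
      push_cast
      field_simp
    rw [harg, Complex.exp_mul_I, ← Complex.ofReal_cos, ← Complex.ofReal_sin,
      Real.cos_neg, Real.sin_neg]
    push_cast
    ring
  rw [step1, intervalIntegral.integral_sub (hcc.intervalIntegrable _ _)
    (hcs.intervalIntegrable _ _), intervalIntegral.integral_const_mul, odd_int_zero,
    mul_zero, sub_zero]
  rw [besselJ]
  have hIn : Complex.I ^ n ≠ 0 := zpow_ne_zero n Complex.I_ne_zero
  have hkey : Complex.I ^ n * (Complex.I ^ (-n) / ((2 * π : ℝ):ℂ)) = ((1 / (2*π) : ℝ):ℂ) := by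
    rw [zpow_neg]
    rw [show Complex.I ^ n * ((Complex.I ^ n)⁻¹ / ((2 * π : ℝ):ℂ))
        = (Complex.I ^ n * (Complex.I ^ n)⁻¹) / ((2 * π : ℝ):ℂ) by ring]
    rw [mul_inv_cancel₀ hIn]
    push_cast
    ring
  have : Complex.I ^ n * ((Complex.I ^ (-n) / (2 * (π:ℂ))) * ∫ θ in (-π:ℝ)..π,
      Complex.exp (Complex.I * z * Real.cos θ) * (Real.cos (n * θ) : ℂ))
      = ((1 / (2*π) : ℝ):ℂ) * ∫ θ in (-π:ℝ)..π,
      Complex.exp (Complex.I * z * Real.cos θ) * (Real.cos (n * θ) : ℂ) := by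
    rw [← mul_assoc]
    congr 1
    rw [← hkey]
    push_cast
    ring
  rw [this]
  rw [Complex.real_smul]
  rfl

lemma summable_coeff (z : ℝ) : Summable (fourierCoeff (JAF z : AddCircle (2*π) → ℂ)) := by
  set M : ℝ := |z| * (1 + |z|) with hM
  have hM0 : 0 ≤ M := by positivity
  have key : ∀ n : ℤ, n ≠ 0 → ‖fourierCoeff (JAF z : AddCircle (2*π) → ℂ) n‖ ≤ M / (n:ℝ)^2 := by
    intro n hn
    rw [fourierCoeff_JAF, ibp1 z hn, ibp2 z hn]
    have hnorm : ‖(1 / (Complex.I * n) : ℂ)‖ = 1 / |(n:ℝ)| := by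
      rw [norm_div, norm_one, norm_mul, Complex.norm_I, one_mul]
      congr 1
      exact_mod_cast Complex.norm_intCast n
    rw [norm_mul, norm_mul, hnorm]
    have h2 := coeff2_bound z n
    have hn0 : (0:ℝ) < |(n:ℝ)| := by
      rw [abs_pos, Int.cast_ne_zero]; exact hn
    calc 1 / |(n:ℝ)| * (1 / |(n:ℝ)| * ‖fourierCoeffOn hab (JAg2 z) n‖)
        ≤ 1 / |(n:ℝ)| * (1 / |(n:ℝ)| * M) := by gcongr
      _ = M / (n:ℝ)^2 := by
          have hnn : |(n:ℝ)| * |(n:ℝ)| = (n:ℝ)^2 := by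
            rw [← abs_mul, abs_mul_self, sq]
          have h2n : ((n:ℝ)^2) ≠ 0 := pow_ne_zero 2 (Int.cast_ne_zero.mpr hn)
          rw [eq_div_iff h2n, ← hnn]
          field_simp
  have hsum : Summable (fun n : ℤ => M / (n:ℝ)^2) := by
    have h1 : Summable (fun n : ℤ => 1 / (n:ℝ)^2) :=
      summable_one_div_int_pow.mpr (by norm_num)
    have := h1.mul_left M
    apply this.congr
    intro n
    rw [mul_one_div]
  apply Summable.of_norm_bounded_eventually hsum
  rw [Filter.eventually_cofinite]
  apply Set.Finite.subset (Set.finite_singleton (0:ℤ))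
  intro n hn
  simp only [Set.mem_setOf_eq, not_le] at hn
  by_contra h0
  exact absurd (key n h0) (not_le.mpr hn)


end JA

/-- Jacobi–Anger expansion: `e^{i z cos θ} = ∑_{m=-∞}^{∞} i^m J_m(z) e^{i m θ}`. -/
theorem jacobi_anger (z θ : ℝ) :
    HasSum (fun m : ℤ => Complex.I ^ m * besselJ m z * Complex.exp (Complex.I * m * θ))
      (Complex.exp (Complex.I * z * Real.cos θ)) := by
  have H := has_pointwise_sum_fourier_series_of_summable (summable_coeff z)
    (θ : AddCircle (2 * π))
  have h1 : ∀ m : ℤ, fourierCoeff (JAF z : AddCircle (2*π) → ℂ) m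
        • fourier m (θ : AddCircle (2 * π))
      = Complex.I ^ m * besselJ m z * Complex.exp (Complex.I * m * θ) := by
    intro m
    rw [fourierCoeff_eq_besselJ, smul_eq_mul, fourier_coe_apply]
    congr 1
    congr 1
    have hπ : (π:ℂ) ≠ 0 := Complex.ofReal_ne_zero.mpr Real.pi_ne_zero
    push_cast
    field_simp
  have h2 : (JAF z : AddCircle (2*π) → ℂ) (θ : AddCircle (2 * π))
      = Complex.exp (Complex.I * z * Real.cos θ) := JAF_coe z θ
  simp only [h1, h2] at H
  exact H
end

section
/- For k > 0, α real with impedance factor pole at t = iα avoided, and x, y > 0, the shifted evanescent integral satisfies: ∫_c^∞ e^{−t y} e^{i x √(t²+k²)} (t + iα)/((t − iα)√(t²+k²)) dt = i e^{−c y} ∫_0^∞ e^{−λ x} e^{−iλ y} · e^{i x (√((c+iλ)²+k²) − iλ)} · ((c+iλ) + iα)/(((c+iλ) − iα) √((c+iλ)²+k²)) dλ, provided c > 0 and c > |α| (so the pole t = iα and branch points ±ik lie outside the rotated region) — here the square root is the principal branch. -/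
open Real Complex MeasureTheory Set Filter

noncomputable def icfW (k : ℝ) (z : ℂ) : ℂ := (z ^ 2 + (k : ℂ) ^ 2) ^ (1 / 2 : ℂ)

noncomputable def icfF (k α x y : ℝ) (z : ℂ) : ℂ :=
  Complex.exp (-z * (y : ℂ)) * Complex.exp (Complex.I * (x : ℂ) * icfW k z) *
    ((z + Complex.I * α) / ((z - Complex.I * α) * icfW k z))

lemma icf_slit {k : ℝ} (hk : 0 < k) {z : ℂ} (hz : 0 < z.re) :
    z ^ 2 + (k : ℂ) ^ 2 ∈ Complex.slitPlane := by
  have him : (z ^ 2 + (k : ℂ) ^ 2).im = 2 * z.re * z.im := by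
    simp [pow_two, Complex.mul_im]; ring
  have hre : (z ^ 2 + (k : ℂ) ^ 2).re = z.re ^ 2 - z.im ^ 2 + k ^ 2 := by
    simp [pow_two, Complex.mul_re]
  rw [Complex.mem_slitPlane_iff]
  rcases eq_or_ne z.im 0 with h | h
  · left; rw [hre, h]; nlinarith
  · right; rw [him]; positivity

lemma icf_sq {u : ℂ} (hu : u ≠ 0) : (u ^ (1 / 2 : ℂ)) ^ 2 = u := by
  rw [sq, ← Complex.cpow_add _ _ hu]
  norm_num

lemma icf_ne {u : ℂ} (hu : u ≠ 0) : u ^ (1 / 2 : ℂ) ≠ 0 := by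
  intro h
  have h2 := icf_sq hu
  rw [h] at h2
  simp at h2
  exact hu h2.symm

lemma icf_abs_sq {u : ℂ} (hu : u ≠ 0) : (‖u ^ (1 / 2 : ℂ)‖) ^ 2 = ‖u‖ := by
  rw [← norm_pow, icf_sq hu]

lemma icf_im_nonneg {u : ℂ} (hu : u ∈ Complex.slitPlane) (him : 0 ≤ u.im) :
    0 ≤ (u ^ (1 / 2 : ℂ)).im := by
  have h0 : u ≠ 0 := Complex.slitPlane_ne_zero hu
  rw [Complex.cpow_def_of_ne_zero h0, Complex.exp_im]
  have h1 : (Complex.log u * (1 / 2 : ℂ)).im = u.arg / 2 := by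
    simp [Complex.mul_im, Complex.log_im]
    ring
  rw [h1]
  apply mul_nonneg (Real.exp_nonneg _)
  apply Real.sin_nonneg_of_nonneg_of_le_pi
  · have := Complex.arg_nonneg_iff.mpr him; linarith
  · have := Complex.arg_le_pi u; linarith [Real.pi_pos]

set_option maxHeartbeats 1000000 in
lemma icf_bound {k α x y c : ℝ} (hk : 0 < k) (hx : 0 < x) (_hy : 0 < y)
    (hαc : |α| < c) (hkc : k < c) {a b : ℝ} (ha : c ≤ a) (hb : 0 ≤ b) :
    ‖icfF k α x y ((a : ℂ) + (b : ℂ) * Complex.I)‖ ≤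
      ((c + 2 * |α|) / (c * c) * Real.exp (x * k)) * Real.exp (-a * y) * Real.exp (-b * x) := by
  have hc0 : 0 < c := lt_of_le_of_lt (abs_nonneg α) hαc
  have ha0 : 0 < a := lt_of_lt_of_le hc0 ha
  set z : ℂ := (a : ℂ) + (b : ℂ) * Complex.I with hz
  have hzre : z.re = a := by simp [hz]
  have hzim : z.im = b := by simp [hz]
  set u : ℂ := z ^ 2 + (k : ℂ) ^ 2 with hu
  have hslit : u ∈ Complex.slitPlane := icf_slit hk (by rw [hzre]; exact ha0)
  have hu0 : u ≠ 0 := Complex.slitPlane_ne_zero hslit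
  set w : ℂ := icfW k z with hwdef
  have hwu : w = u ^ (1 / 2 : ℂ) := rfl
  have hure : u.re = a ^ 2 - b ^ 2 + k ^ 2 := by
    simp [hu, hz, pow_two, Complex.mul_re]
  have huim : u.im = 2 * a * b := by
    simp [hu, hz, pow_two, Complex.mul_im]; ring
  -- |u| ≥ a² + (b-k)²
  have habs2 : (‖u‖) ^ 2 = (a ^ 2 - b ^ 2 + k ^ 2) ^ 2 + (2 * a * b) ^ 2 := by
    rw [Complex.sq_norm, Complex.normSq_apply, hure, huim]; ring
  have habs_ge : a ^ 2 + (b - k) ^ 2 ≤ ‖u‖ := by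
    nlinarith [norm_nonneg u, sq_nonneg (b - k), sq_nonneg (‖u‖ - (a ^ 2 + (b - k) ^ 2)),
      mul_nonneg (mul_nonneg hk.le hb) (sq_nonneg (b - k)), mul_nonneg (mul_nonneg hk.le hb) (sq_nonneg a)]
  -- |w| ≥ c
  have habsw2 : (‖w‖) ^ 2 = ‖u‖ := by rw [hwu]; exact icf_abs_sq hu0
  have habsw : c ≤ ‖w‖ := by
    have h1 : c ^ 2 ≤ (‖w‖) ^ 2 := by
      rw [habsw2]
      nlinarith [habs_ge, sq_nonneg (b - k), ha, hc0]
    nlinarith [h1, norm_nonneg w, hc0]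
  -- w.im ≥ b - k
  have hwim_nonneg : 0 ≤ w.im := by
    rw [hwu]; exact icf_im_nonneg hslit (by rw [huim]; positivity)
  have hwsq : w ^ 2 = u := by rw [hwu]; exact icf_sq hu0
  have hw_resq : w.re ^ 2 - w.im ^ 2 = u.re := by
    have : (w ^ 2).re = u.re := by rw [hwsq]
    simpa [pow_two, Complex.mul_re] using this
  have hw_abssq : w.re ^ 2 + w.im ^ 2 = ‖u‖ := by
    rw [← habsw2, Complex.sq_norm, Complex.normSq_apply]; ring
  have hwim : b - k ≤ w.im := by
    rcases le_or_gt b k with h | h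
    · linarith
    · have h2i : 2 * w.im ^ 2 = ‖u‖ - u.re := by linarith [hw_resq, hw_abssq]
      have hbk : b ^ 2 - b * k ≤ w.im ^ 2 := by
        rw [hure] at h2i
        have hexp : a ^ 2 + (b - k) ^ 2 = a ^ 2 + b ^ 2 - 2 * (b * k) + k ^ 2 := by ring
        linarith [habs_ge, h2i]
      have hsq : (b - k) ^ 2 ≤ w.im ^ 2 := by
        have he1 : (b - k) ^ 2 = b ^ 2 - 2 * (b * k) + k ^ 2 := by ring
        have he2 : k * (b - k) = b * k - k ^ 2 := by ring
        have := mul_pos hk (sub_pos.mpr h)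
        linarith
      nlinarith [hsq, hwim_nonneg]
  -- norm of f
  have hD : c ≤ ‖z - Complex.I * α‖ := by
    have h1 : (z - Complex.I * (α : ℂ)).re = a := by simp [hz]
    calc c ≤ a := ha
    _ ≤ |(z - Complex.I * (α : ℂ)).re| := by rw [h1]; exact le_abs_self a
    _ ≤ ‖z - Complex.I * α‖ := Complex.abs_re_le_norm _
  have hD0 : 0 < ‖z - Complex.I * α‖ := lt_of_lt_of_le hc0 hD
  have hN : ‖z + Complex.I * α‖ ≤ ‖z - Complex.I * α‖ + 2 * |α| := by
    have h1 : z + Complex.I * α = (z - Complex.I * α) + 2 * Complex.I * α := by ring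
    rw [h1]
    refine le_trans (norm_add_le _ _) ?_
    have : ‖2 * Complex.I * (α : ℂ)‖ = 2 * |α| := by
      simp
    rw [this]
  have hnorm : ‖icfF k α x y z‖ = Real.exp (-a * y) * Real.exp (-(x * w.im)) *
      (‖z + Complex.I * α‖ / (‖z - Complex.I * α‖ * ‖w‖)) := by
    have h1 : (-z * (y : ℂ)).re = -a * y := by simp [hz]
    have h2 : (Complex.I * (x : ℂ) * w).re = -(x * w.im) := by
      simp [Complex.mul_re, Complex.mul_im]
    simp only [icfF, ← hwdef, norm_mul, Complex.norm_exp, h1, h2, norm_div]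
  have hratio : ‖z + Complex.I * α‖ / (‖z - Complex.I * α‖ * ‖w‖)
      ≤ (c + 2 * |α|) / (c * c) := by
    rw [div_le_div_iff₀ (mul_pos hD0 (lt_of_lt_of_le hc0 habsw)) (by positivity)]
    have hA : (0:ℝ) ≤ |α| := abs_nonneg α
    calc ‖z + Complex.I * α‖ * (c * c)
        ≤ (‖z - Complex.I * α‖ + 2 * |α|) * (c * c) :=
          mul_le_mul_of_nonneg_right hN (by positivity)
      _ ≤ (c + 2 * |α|) * (‖z - Complex.I * α‖ * c) := by
          nlinarith [mul_le_mul_of_nonneg_left hD hA, hc0.le, hD]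
      _ ≤ (c + 2 * |α|) * (‖z - Complex.I * α‖ * ‖w‖) := by
          apply mul_le_mul_of_nonneg_left
            (mul_le_mul_of_nonneg_left habsw hD0.le) (by positivity)
  have hexp2 : Real.exp (-(x * w.im)) ≤ Real.exp (x * k) * Real.exp (-b * x) := by
    rw [← Real.exp_add]
    apply Real.exp_le_exp.mpr
    nlinarith [hwim, hx]
  rw [hnorm]
  calc Real.exp (-a * y) * Real.exp (-(x * w.im)) *
      (‖z + Complex.I * α‖ / (‖z - Complex.I * α‖ * ‖w‖))
      ≤ Real.exp (-a * y) * (Real.exp (x * k) * Real.exp (-b * x)) * ((c + 2 * |α|) / (c * c)) := by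
        apply mul_le_mul (mul_le_mul_of_nonneg_left hexp2 (Real.exp_nonneg _)) hratio
          (by positivity) (by positivity)
    _ = (c + 2 * |α|) / (c * c) * Real.exp (x * k) * Real.exp (-a * y) * Real.exp (-b * x) := by ring

lemma icf_diff {k : ℝ} (hk : 0 < k) (α x y : ℝ) {z : ℂ} (hz : 0 < z.re) :
    DifferentiableAt ℂ (icfF k α x y) z := by
  have hs := icf_slit hk hz
  have hu0 : z ^ 2 + (k : ℂ) ^ 2 ≠ 0 := Complex.slitPlane_ne_zero hs
  have hw : DifferentiableAt ℂ (icfW k) z := by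
    unfold icfW
    exact DifferentiableAt.cpow (by fun_prop) (differentiableAt_const _) hs
  have h1 : z - Complex.I * α ≠ 0 := by
    intro h
    have h2 : (z - Complex.I * (α : ℂ)).re = z.re := by simp
    rw [h] at h2
    simp at h2
    exact absurd h2.symm (ne_of_gt hz)
  have h2 : icfW k z ≠ 0 := icf_ne hu0
  apply DifferentiableAt.mul
  apply DifferentiableAt.mul
  · exact (differentiableAt_id.neg.mul (differentiableAt_const _)).cexp
  · exact ((differentiableAt_const _).mul hw).cexp
  · exact DifferentiableAt.div (differentiableAt_id.add (differentiableAt_const _))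
      ((differentiableAt_id.sub (differentiableAt_const _)).mul hw) (mul_ne_zero h1 h2)

/-- Shifted evanescent integral for the impedance half-space Green's function: rotating
the contour from the horizontal ray `{t ≥ c}` to the vertical ray `{c + iλ : λ ≥ 0}`.
`(·)^(1/2 : ℂ)` denotes the principal branch of the complex square root. -/
theorem impedance_evanescent_contour_rotation (k α x y c : ℝ)
    (hk : 0 < k) (hx : 0 < x) (hy : 0 < y) (hc : max |α| k < c) :
    (∫ t in Set.Ioi c,
        Complex.exp (-(t : ℂ) * y) * Complex.exp (Complex.I * x * Real.sqrt (t ^ 2 + k ^ 2)) *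
          (((t : ℂ) + Complex.I * α) /
            (((t : ℂ) - Complex.I * α) * (Real.sqrt (t ^ 2 + k ^ 2) : ℂ))))
      = Complex.I * Complex.exp (-(c : ℂ) * y) *
          ∫ l in Set.Ioi (0 : ℝ),
            Complex.exp (-(l : ℂ) * x) * Complex.exp (-Complex.I * l * y) *
              Complex.exp (Complex.I * x *
                ((((c : ℂ) + Complex.I * l) ^ 2 + (k : ℂ) ^ 2) ^ (1 / 2 : ℂ)
                  - Complex.I * l)) *
              ((((c : ℂ) + Complex.I * l) + Complex.I * α) /
                ((((c : ℂ) + Complex.I * l) - Complex.I * α) *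
                  ((((c : ℂ) + Complex.I * l) ^ 2 + (k : ℂ) ^ 2) ^ (1 / 2 : ℂ)))) := by
  have hαc : |α| < c := lt_of_le_of_lt (le_max_left _ _) hc
  have hkc : k < c := lt_of_le_of_lt (le_max_right _ _) hc
  have hc0 : 0 < c := hk.trans hkc
  set f : ℂ → ℂ := icfF k α x y with hf
  set C : ℝ := (c + 2 * |α|) / (c * c) * Real.exp (x * k) with hCdef
  have hC0 : 0 ≤ C := by positivity
  have hbound : ∀ a b : ℝ, c ≤ a → 0 ≤ b →
      ‖f ((a : ℂ) + (b : ℂ) * Complex.I)‖ ≤ C * Real.exp (-a * y) * Real.exp (-b * x) :=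
    fun a b ha hb => icf_bound hk hx hy hαc hkc ha hb
  have hboundR : ∀ t : ℝ, c ≤ t → ‖f (t : ℂ)‖ ≤ C * Real.exp (-t * y) := by
    intro t ht
    have h0 : ((t : ℂ) + ((0 : ℝ) : ℂ) * Complex.I) = (t : ℂ) := by simp
    have h1 := hbound t 0 ht le_rfl
    rw [h0] at h1
    simpa using h1
  have hcont : ∀ a : ℝ, c ≤ a → Continuous fun b : ℝ => f ((a : ℂ) + (b : ℂ) * Complex.I) := by
    intro a ha
    rw [continuous_iff_continuousAt]
    intro b
    have hd : DifferentiableAt ℂ f ((a : ℂ) + (b : ℂ) * Complex.I) :=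
      icf_diff hk α x y (by simp; linarith)
    have hcm : ContinuousAt (fun b : ℝ => ((a : ℂ) + (b : ℂ) * Complex.I)) b := by fun_prop
    have heq : (fun b : ℝ => f ((a : ℂ) + (b : ℂ) * Complex.I))
        = f ∘ (fun b : ℝ => ((a : ℂ) + (b : ℂ) * Complex.I)) := rfl
    show ContinuousAt (f ∘ fun b : ℝ => ((a : ℂ) + (b : ℂ) * Complex.I)) b
    exact ContinuousAt.comp hd.continuousAt hcm
  have hIntVert : ∀ a : ℝ, c ≤ a →
      IntegrableOn (fun b : ℝ => f ((a : ℂ) + (b : ℂ) * Complex.I)) (Ioi 0) := by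
    intro a ha
    apply Integrable.mono' (g := fun b : ℝ => (C * Real.exp (-a * y)) * Real.exp (-x * b))
      ((exp_neg_integrableOn_Ioi 0 hx).const_mul _)
      ((hcont a ha).aestronglyMeasurable)
    filter_upwards [ae_restrict_mem measurableSet_Ioi] with b hb
    calc ‖f ((a : ℂ) + (b : ℂ) * Complex.I)‖ ≤ C * Real.exp (-a * y) * Real.exp (-b * x) :=
        hbound a b ha (le_of_lt hb)
      _ = C * Real.exp (-a * y) * Real.exp (-x * b) := by rw [show -b * x = -x * b by ring]
      _ = (C * Real.exp (-a * y)) * Real.exp (-x * b) := by ring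
  have hIntHoriz : IntegrableOn (fun t : ℝ => f (t : ℂ)) (Ioi c) := by
    apply Integrable.mono' (g := fun t : ℝ => C * Real.exp (-y * t))
      ((exp_neg_integrableOn_Ioi c hy).const_mul _)
    · apply ContinuousOn.aestronglyMeasurable ?_ measurableSet_Ioi
      intro t ht
      have hd : DifferentiableAt ℂ f (t : ℂ) :=
        icf_diff hk α x y (by simpa using hc0.trans ht)
      exact (hd.continuousAt.comp Complex.continuous_ofReal.continuousAt).continuousWithinAt
    · filter_upwards [ae_restrict_mem measurableSet_Ioi] with t ht
      calc ‖f (t : ℂ)‖ ≤ C * Real.exp (-t * y) := hboundR t (le_of_lt ht)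
        _ = C * Real.exp (-y * t) := by rw [show -t * y = -y * t by ring]
  set g : ℝ → ℂ := fun a => ∫ b in Ioi (0 : ℝ), f ((a : ℂ) + (b : ℂ) * Complex.I) with hgdef
  have hrect : ∀ R : ℝ, c ≤ R → ∀ L : ℝ, 0 ≤ L →
      (∫ t in c..R, f (t : ℂ)) - (∫ t in c..R, f ((t : ℂ) + (L : ℂ) * Complex.I))
        + Complex.I • (∫ b in (0 : ℝ)..L, f ((R : ℂ) + (b : ℂ) * Complex.I))
        - Complex.I • (∫ b in (0 : ℝ)..L, f ((c : ℂ) + (b : ℂ) * Complex.I)) = 0 := by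
    intro R hR L hL
    have key := Complex.integral_boundary_rect_eq_zero_of_differentiableOn f (c : ℂ)
      ((R : ℂ) + (L : ℂ) * Complex.I) ?_
    · have hre1 : ((c : ℂ)).re = c := Complex.ofReal_re c
      have him1 : ((c : ℂ)).im = 0 := Complex.ofReal_im c
      have hre2 : ((R : ℂ) + (L : ℂ) * Complex.I).re = R := by simp
      have him2 : ((R : ℂ) + (L : ℂ) * Complex.I).im = L := by simp
      rw [hre1, him1, hre2, him2] at key
      simpa using key
    · intro z hz
      rw [Complex.mem_reProdIm] at hz
      obtain ⟨h1, h2⟩ := hz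
      have hre2 : ((R : ℂ) + (L : ℂ) * Complex.I).re = R := by simp
      rw [Complex.ofReal_re, hre2, Set.uIcc_of_le hR] at h1
      exact (icf_diff hk α x y (hc0.trans_le h1.1)).differentiableWithinAt
  have hexpTendsto : ∀ r : ℝ, 0 < r →
      Tendsto (fun L : ℝ => Real.exp (-L * r)) atTop (nhds 0) := by
    intro r hr
    have h1 : Tendsto (fun L : ℝ => L * r) atTop atTop :=
      Tendsto.atTop_mul_const hr tendsto_id
    have h2 := Real.tendsto_exp_atBot.comp (tendsto_neg_atTop_atBot.comp h1)
    exact h2.congr fun L => by simp [Function.comp, neg_mul]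
  have hTop : ∀ R : ℝ, c ≤ R →
      Tendsto (fun L : ℝ => ∫ t in c..R, f ((t : ℂ) + (L : ℂ) * Complex.I)) atTop (nhds 0) := by
    intro R hR
    apply squeeze_zero_norm' (a := fun L : ℝ => (C * Real.exp (-c * y) * |R - c|) * Real.exp (-L * x))
    · filter_upwards [eventually_ge_atTop (0 : ℝ)] with L hL
      have hb : ∀ t ∈ Set.uIoc c R,
          ‖f ((t : ℂ) + (L : ℂ) * Complex.I)‖ ≤ C * Real.exp (-c * y) * Real.exp (-L * x) := by
        intro t ht
        rw [Set.uIoc_of_le hR] at ht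
        calc ‖f ((t : ℂ) + (L : ℂ) * Complex.I)‖ ≤ C * Real.exp (-t * y) * Real.exp (-L * x) :=
            hbound t L (le_of_lt ht.1) hL
          _ ≤ C * Real.exp (-c * y) * Real.exp (-L * x) := by
            have : Real.exp (-t * y) ≤ Real.exp (-c * y) := by
              apply Real.exp_le_exp.mpr; nlinarith [ht.1, hy]
            have := mul_le_mul_of_nonneg_left this hC0
            exact mul_le_mul_of_nonneg_right this (Real.exp_nonneg _)
      calc ‖∫ t in c..R, f ((t : ℂ) + (L : ℂ) * Complex.I)‖
          ≤ C * Real.exp (-c * y) * Real.exp (-L * x) * |R - c| :=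
            intervalIntegral.norm_integral_le_of_norm_le_const hb
        _ = (C * Real.exp (-c * y) * |R - c|) * Real.exp (-L * x) := by ring
    · have h2 := (hexpTendsto x hx).const_mul (C * Real.exp (-c * y) * |R - c|)
      simpa using h2
  have hVert : ∀ a : ℝ, c ≤ a →
      Tendsto (fun L : ℝ => ∫ b in (0 : ℝ)..L, f ((a : ℂ) + (b : ℂ) * Complex.I)) atTop
        (nhds (g a)) :=
    fun a ha => intervalIntegral_tendsto_integral_Ioi 0 (hIntVert a ha) tendsto_id
  have hkey : ∀ R : ℝ, c ≤ R →
      (∫ t in c..R, f (t : ℂ)) = Complex.I • g c - Complex.I • g R := by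
    intro R hR
    have h1 : Tendsto (fun L : ℝ =>
        (∫ t in c..R, f (t : ℂ)) - (∫ t in c..R, f ((t : ℂ) + (L : ℂ) * Complex.I))
          + Complex.I • (∫ b in (0 : ℝ)..L, f ((R : ℂ) + (b : ℂ) * Complex.I))
          - Complex.I • (∫ b in (0 : ℝ)..L, f ((c : ℂ) + (b : ℂ) * Complex.I))) atTop
        (nhds ((∫ t in c..R, f (t : ℂ)) - 0 + Complex.I • g R - Complex.I • g c)) :=
      ((tendsto_const_nhds.sub (hTop R hR)).add ((hVert R hR).const_smul _)).sub
        ((hVert c le_rfl).const_smul _)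
    have h2 : Tendsto (fun L : ℝ =>
        (∫ t in c..R, f (t : ℂ)) - (∫ t in c..R, f ((t : ℂ) + (L : ℂ) * Complex.I))
          + Complex.I • (∫ b in (0 : ℝ)..L, f ((R : ℂ) + (b : ℂ) * Complex.I))
          - Complex.I • (∫ b in (0 : ℝ)..L, f ((c : ℂ) + (b : ℂ) * Complex.I))) atTop
        (nhds 0) := by
      apply Tendsto.congr' ?_ tendsto_const_nhds
      filter_upwards [eventually_ge_atTop (0 : ℝ)] with L hL
      exact (hrect R hR L hL).symm
    have h3 := tendsto_nhds_unique h1 h2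
    simp only [smul_eq_mul] at h3 ⊢
    linear_combination h3
  set K : ℝ := ∫ b in Ioi (0 : ℝ), Real.exp (-x * b) with hK
  have hgZero : Tendsto g atTop (nhds 0) := by
    apply squeeze_zero_norm' (a := fun R : ℝ => (C * K) * Real.exp (-R * y))
    · filter_upwards [eventually_ge_atTop c] with R hR
      have hb1 : ‖g R‖ ≤ ∫ b in Ioi (0 : ℝ), (C * Real.exp (-R * y)) * Real.exp (-x * b) := by
        rw [hgdef]
        apply norm_integral_le_of_norm_le ((exp_neg_integrableOn_Ioi 0 hx).const_mul _)
        filter_upwards [ae_restrict_mem measurableSet_Ioi] with b hb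
        rw [show -x * b = -b * x from by ring]
        exact hbound R b hR (le_of_lt hb)
      have hb3 : (∫ b in Ioi (0 : ℝ), (C * Real.exp (-R * y)) * Real.exp (-x * b))
          = (C * K) * Real.exp (-R * y) := by
        rw [MeasureTheory.integral_const_mul, hK]
        ring
      exact le_of_le_of_eq hb1 hb3
    · have h2 := (hexpTendsto y hy).const_mul (C * K)
      simpa using h2
  have hmain : (∫ t in Ioi c, f (t : ℂ)) = Complex.I • g c := by
    have h1 : Tendsto (fun R : ℝ => ∫ t in c..R, f (t : ℂ)) atTop
        (nhds (∫ t in Ioi c, f (t : ℂ))) :=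
      intervalIntegral_tendsto_integral_Ioi c hIntHoriz tendsto_id
    have h2 : Tendsto (fun R : ℝ => Complex.I • g c - Complex.I • g R) atTop
        (nhds (Complex.I • g c - Complex.I • (0 : ℂ))) :=
      tendsto_const_nhds.sub (hgZero.const_smul _)
    have h3 : (fun R : ℝ => ∫ t in c..R, f (t : ℂ)) =ᶠ[atTop]
        fun R => Complex.I • g c - Complex.I • g R := by
      filter_upwards [eventually_ge_atTop c] with R hR
      exact hkey R hR
    have h4 := tendsto_nhds_unique (h1.congr' h3) h2
    simpa using h4
  have hsqrt : ∀ t : ℝ, ((Real.sqrt (t ^ 2 + k ^ 2) : ℝ) : ℂ) = icfW k (t : ℂ) := by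
    intro t
    have h1 : ((t : ℂ) ^ 2 + (k : ℂ) ^ 2) = ((t ^ 2 + k ^ 2 : ℝ) : ℂ) := by push_cast; ring
    have h2 : ((1 : ℂ) / 2) = (((1 : ℝ) / 2 : ℝ) : ℂ) := by norm_num
    rw [icfW, h1, h2, ← Complex.ofReal_cpow (by positivity), Real.sqrt_eq_rpow]
  have hLHS : (∫ t in Set.Ioi c,
        Complex.exp (-(t : ℂ) * y) * Complex.exp (Complex.I * x * Real.sqrt (t ^ 2 + k ^ 2)) *
          (((t : ℂ) + Complex.I * α) /
            (((t : ℂ) - Complex.I * α) * (Real.sqrt (t ^ 2 + k ^ 2) : ℂ))))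
      = ∫ t in Ioi c, f (t : ℂ) := by
    apply setIntegral_congr_fun measurableSet_Ioi
    intro t _
    dsimp only
    rw [hf]
    unfold icfF
    rw [← hsqrt t]
  have hRHSpt : ∀ l : ℝ, f ((c : ℂ) + (l : ℂ) * Complex.I) = Complex.exp (-(c : ℂ) * y) *
      (Complex.exp (-(l : ℂ) * x) * Complex.exp (-Complex.I * l * y) *
        Complex.exp (Complex.I * x *
          ((((c : ℂ) + Complex.I * l) ^ 2 + (k : ℂ) ^ 2) ^ (1 / 2 : ℂ) - Complex.I * l)) *
        ((((c : ℂ) + Complex.I * l) + Complex.I * α) /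
          ((((c : ℂ) + Complex.I * l) - Complex.I * α) *
            ((((c : ℂ) + Complex.I * l) ^ 2 + (k : ℂ) ^ 2) ^ (1 / 2 : ℂ))))) := by
    intro l
    have hzc : ((c : ℂ) + (l : ℂ) * Complex.I) = ((c : ℂ) + Complex.I * (l : ℂ)) := by ring
    rw [hf]
    unfold icfF
    rw [hzc]
    unfold icfW
    set w : ℂ := (((c : ℂ) + Complex.I * l) ^ 2 + (k : ℂ) ^ 2) ^ (1 / 2 : ℂ) with hw
    have e1 : Complex.exp (-((c : ℂ) + Complex.I * l) * y)
        = Complex.exp (-(c : ℂ) * y) * Complex.exp (-Complex.I * l * y) := by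
      rw [← Complex.exp_add]; congr 1; ring
    have e2 : Complex.exp (Complex.I * x * w)
        = Complex.exp (-(l : ℂ) * x) * Complex.exp (Complex.I * x * (w - Complex.I * l)) := by
      rw [← Complex.exp_add]; congr 1
      linear_combination ((x : ℂ) * (l : ℂ)) * Complex.I_sq
    rw [e1, e2]; ring
  rw [hLHS, hmain, smul_eq_mul]
  have hgc : g c = ∫ l in Ioi (0 : ℝ), Complex.exp (-(c : ℂ) * y) *
      (Complex.exp (-(l : ℂ) * x) * Complex.exp (-Complex.I * l * y) *
        Complex.exp (Complex.I * x *
          ((((c : ℂ) + Complex.I * l) ^ 2 + (k : ℂ) ^ 2) ^ (1 / 2 : ℂ) - Complex.I * l)) *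
        ((((c : ℂ) + Complex.I * l) + Complex.I * α) /
          ((((c : ℂ) + Complex.I * l) - Complex.I * α) *
            ((((c : ℂ) + Complex.I * l) ^ 2 + (k : ℂ) ^ 2) ^ (1 / 2 : ℂ))))) := by
    rw [hgdef]
    exact integral_congr_ae (Filter.Eventually.of_forall fun l => hRHSpt l)
  rw [hgc, MeasureTheory.integral_const_mul, ← mul_assoc]
end
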